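/- arXiv:2409.00728 — 3 statements merged into one kernel-verified Lean document; each statement's English description precedes it below -/
import Mathlib

section
/- For mutually absolutely continuous probability measures $P_0, P_1$, the function $g(\lambda) = \lambda D_{\mathrm{KL}}(P_0\|P_1) - \log \mathsf{E}_{P_1}[(dP_0/dP_1)^\lambda]$ satisfies $\sup_{\lambda \geq 0} g(\lambda) = g(1) = D_{\mathrm{KL}}(P_0 \| P_1)$, provided $\mathsf{E}_{P_1}[(dP_0/dP_1)^\lambda] < \infty$ for all $\lambda \geq 0$. -/
open MeasureTheory

lemma key_ineq {Ω : Type*} [MeasurableSpace Ω] (P0 P1 : Measure Ω)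
    [IsProbabilityMeasure P0] [IsProbabilityMeasure P1]
    (hac0 : P0 ≪ P1) (hac1 : P1 ≪ P0)
    (hKL : Integrable (fun ω => Real.log ((P0.rnDeriv P1 ω).toReal)) P0)
    (l : ℝ) (hl : 0 ≤ l)
    (hmoml : Integrable (fun ω => ((P0.rnDeriv P1 ω).toReal) ^ l) P1) :
    (l - 1) * (∫ ω, Real.log ((P0.rnDeriv P1 ω).toReal) ∂P0)
      ≤ Real.log (∫ ω, ((P0.rnDeriv P1 ω).toReal) ^ l ∂P1) := by
  set f : Ω → ℝ := fun ω => ((P0.rnDeriv P1 ω).toReal) with hf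
  have hpos0 : ∀ᵐ ω ∂P0, 0 < f ω := by
    filter_upwards [Measure.rnDeriv_pos hac0, hac0.ae_le (Measure.rnDeriv_lt_top P0 P1)]
      with ω h1 h2
    exact ENNReal.toReal_pos h1.ne' h2.ne
  have hpos1 : ∀ᵐ ω ∂P1, 0 < f ω := hac1.ae_le hpos0
  -- change of measure: ∫ f^l dP1 = ∫ f^(l-1) dP0
  have hchg : ∫ ω, f ω ^ l ∂P1 = ∫ ω, f ω ^ (l - 1) ∂P0 := by
    rw [← MeasureTheory.integral_rnDeriv_smul hac0 (f := fun ω => f ω ^ (l - 1))]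
    refine integral_congr_ae ?_
    filter_upwards [hpos1] with ω hω
    simp only [smul_eq_mul]
    rw [mul_comm, ← Real.rpow_add_one hω.ne']
    norm_num
  -- integrability of f^(l-1) w.r.t. P0
  have hint2 : Integrable (fun ω => f ω ^ (l - 1)) P0 := by
    rw [← MeasureTheory.integrable_rnDeriv_smul_iff hac0]
    refine hmoml.congr ?_
    filter_upwards [hpos1] with ω hω
    simp only [smul_eq_mul]
    rw [mul_comm, ← Real.rpow_add_one hω.ne']
    norm_num
    rfl
  have hint1 : Integrable (fun ω => (l - 1) * Real.log (f ω)) P0 := hKL.const_mul _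
  -- Jensen with exp convex
  have hjensen : Real.exp (∫ ω, (l - 1) * Real.log (f ω) ∂P0)
      ≤ ∫ ω, Real.exp ((l - 1) * Real.log (f ω)) ∂P0 := by
    refine convexOn_exp.map_integral_le (Real.continuous_exp.continuousOn) isClosed_univ
      (Filter.Eventually.of_forall fun _ => trivial) hint1 ?_
    refine hint2.congr ?_
    filter_upwards [hpos0] with ω hω
    simp only [Function.comp]
    rw [Real.rpow_def_of_pos hω, mul_comm]
  have hcongr : ∫ ω, Real.exp ((l - 1) * Real.log (f ω)) ∂P0 = ∫ ω, f ω ^ (l - 1) ∂P0 := by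
    refine integral_congr_ae ?_
    filter_upwards [hpos0] with ω hω
    rw [Real.rpow_def_of_pos hω, mul_comm]
  rw [hcongr, ← hchg] at hjensen
  rw [integral_const_mul] at hjensen
  have hIpos : 0 < ∫ ω, f ω ^ l ∂P1 := lt_of_lt_of_le (Real.exp_pos _) hjensen
  rw [← Real.le_log_iff_exp_le hIpos] at hjensen
  exact hjensen

/-- `g(λ) = λ D_KL(P0‖P1) - log E_{P1}[(dP0/dP1)^λ]` attains its supremum over
`λ ≥ 0` at `λ = 1`, where the value is `D_KL(P0‖P1)`. -/
theorem stmt_6 {Ω : Type*} [MeasurableSpace Ω] (P0 P1 : Measure Ω)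
    [IsProbabilityMeasure P0] [IsProbabilityMeasure P1]
    (hac0 : P0 ≪ P1) (hac1 : P1 ≪ P0)
    (hKL : Integrable (fun ω => Real.log ((P0.rnDeriv P1 ω).toReal)) P0)
    (hmom : ∀ l : ℝ, 0 ≤ l → Integrable (fun ω => ((P0.rnDeriv P1 ω).toReal) ^ l) P1) :
    IsLUB {y : ℝ | ∃ l : ℝ, 0 ≤ l ∧
        y = l * (∫ ω, Real.log ((P0.rnDeriv P1 ω).toReal) ∂P0)
              - Real.log (∫ ω, ((P0.rnDeriv P1 ω).toReal) ^ l ∂P1)}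
    ((1 : ℝ) * (∫ ω, Real.log ((P0.rnDeriv P1 ω).toReal) ∂P0)
        - Real.log (∫ ω, ((P0.rnDeriv P1 ω).toReal) ^ (1 : ℝ) ∂P1))
    ∧ (1 : ℝ) * (∫ ω, Real.log ((P0.rnDeriv P1 ω).toReal) ∂P0)
        - Real.log (∫ ω, ((P0.rnDeriv P1 ω).toReal) ^ (1 : ℝ) ∂P1)
      = ∫ ω, Real.log ((P0.rnDeriv P1 ω).toReal) ∂P0 := by
  have hone : ∫ ω, ((P0.rnDeriv P1 ω).toReal) ^ (1 : ℝ) ∂P1 = 1 := by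
    simp_rw [Real.rpow_one]
    rw [Measure.integral_toReal_rnDeriv hac0]
    simp
  have hval : (1 : ℝ) * (∫ ω, Real.log ((P0.rnDeriv P1 ω).toReal) ∂P0)
        - Real.log (∫ ω, ((P0.rnDeriv P1 ω).toReal) ^ (1 : ℝ) ∂P1)
      = ∫ ω, Real.log ((P0.rnDeriv P1 ω).toReal) ∂P0 := by
    rw [hone]; simp
  refine ⟨⟨?_, ?_⟩, hval⟩
  · rintro y ⟨l, hl, rfl⟩
    have := key_ineq P0 P1 hac0 hac1 hKL l hl (hmom l hl)
    rw [hval]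
    nlinarith [this]
  · intro b hb
    exact hb ⟨1, zero_le_one, rfl⟩
end

section
/- Let $P_\theta$ for $\theta \in [0,1]$ denote the exponentially tilted distribution with density proportional to $P_0(x)^{1-\theta} P_1(x)^{\theta}$ for mutually absolutely continuous probability measures $P_0, P_1$ with finite Chernoff integrals. If $\theta^* \in (0,1)$ maximizes $\theta \mapsto -\log \int P_0(x)^{1-\theta} P_1(x)^{\theta} dx$, then $D_{\mathrm{KL}}(P_{\theta^*} \| P_0) = D_{\mathrm{KL}}(P_{\theta^*} \| P_1) = \mathrm{CI}(P_0, P_1)$, where $\mathrm{CI}(P_0, P_1) = \sup_{\theta \in [0,1]} -\log \int P_0^{1-\theta} P_1^{\theta}$ is the Chernoff information. -/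
open MeasureTheory Set

lemma aux_log_le {r δ : ℝ} (hr : 0 < r) (hδ : 0 < δ) : Real.log r ≤ r ^ δ / δ := by
  have h := Real.log_le_sub_one_of_pos (Real.rpow_pos_of_pos hr δ)
  rw [Real.log_rpow hr] at h
  rw [le_div_iff₀ hδ]
  linarith

lemma aux_log_abs {r δ : ℝ} (hr : 0 < r) (hδ : 0 < δ) :
    |Real.log r| ≤ (r ^ δ + r ^ (-δ)) / δ := by
  have h1 := aux_log_le hr hδ
  have h2 := aux_log_le (inv_pos.mpr hr) hδ
  rw [Real.log_inv, ← Real.rpow_neg_one r, ← Real.rpow_mul hr.le, neg_one_mul] at h2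
  have hp1 : (0:ℝ) ≤ r ^ δ := (Real.rpow_pos_of_pos hr δ).le
  have hp2 : (0:ℝ) ≤ r ^ (-δ) := (Real.rpow_pos_of_pos hr (-δ)).le
  rw [abs_le]
  constructor
  · rw [neg_le]
    calc -Real.log r ≤ r ^ (-δ) / δ := h2
      _ ≤ _ := by gcongr; linarith
  · calc Real.log r ≤ r ^ δ / δ := h1
      _ ≤ _ := by gcongr; linarith

lemma aux_rpow_convex {r : ℝ} (hr : 0 < r) {a b t : ℝ} (hat : a ≤ t) (htb : t ≤ b) :
    r ^ t ≤ r ^ a + r ^ b := by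
  rcases le_or_gt 1 r with h | h
  · have := Real.rpow_le_rpow_of_exponent_le h htb
    have := (Real.rpow_pos_of_pos hr a).le
    linarith
  · have := Real.rpow_le_rpow_of_exponent_ge hr h.le hat
    have := (Real.rpow_pos_of_pos hr b).le
    linarith

lemma aux_deriv {u v : ℝ} (hu : 0 < u) (hv : 0 < v) (θ : ℝ) :
    HasDerivAt (fun t => u ^ (1 - t) * v ^ t)
      (u ^ (1 - θ) * v ^ θ * Real.log (v / u)) θ := by
  have heq : (fun t : ℝ => u ^ (1 - t) * v ^ t)
      = fun t => Real.exp (Real.log u * (1 - t) + Real.log v * t) := by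
    funext t
    rw [Real.rpow_def_of_pos hu, Real.rpow_def_of_pos hv, ← Real.exp_add]
  rw [heq]
  have h1 : HasDerivAt (fun t : ℝ => Real.log u * (1 - t) + Real.log v * t)
      (Real.log v - Real.log u) θ := by
    have : HasDerivAt (fun t : ℝ => Real.log u * (1 - t) + Real.log v * t)
        (Real.log u * (0 - 1) + Real.log v * 1) θ :=
      (((hasDerivAt_const θ (1:ℝ)).sub (hasDerivAt_id θ)).const_mul _).add
        ((hasDerivAt_id θ).const_mul _)
    convert this using 1; ring
  have := h1.exp
  convert this using 1
  rw [Real.rpow_def_of_pos hu, Real.rpow_def_of_pos hv, ← Real.exp_add,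
    Real.log_div hv.ne' hu.ne']

lemma aux_id {u v : ℝ} (hu : 0 < u) (hv : 0 < v) (t : ℝ) :
    u ^ (1 - t) * v ^ t = u * (v / u) ^ t := by
  rw [Real.div_rpow hv.le hu.le, Real.rpow_sub hu, Real.rpow_one]
  have := (Real.rpow_pos_of_pos hu t).ne'
  field_simp

/-- If `θ* ∈ (0,1)` maximizes the Chernoff exponent `θ ↦ -log ∫ p0^{1-θ} p1^θ dν`,
then the tilted distribution `p_{θ*} ∝ p0^{1-θ*} p1^{θ*}` satisfies
`D_KL(P_{θ*}‖P0) = D_KL(P_{θ*}‖P1) = CI(P0,P1)`. -/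
theorem stmt_8 {X : Type*} [MeasurableSpace X] (ν : Measure X) [SigmaFinite ν]
    (p0 p1 : X → ℝ)
    (hp0pos : ∀ᵐ x ∂ν, 0 < p0 x) (hp1pos : ∀ᵐ x ∂ν, 0 < p1 x)
    (hp0 : ∫ x, p0 x ∂ν = 1) (hp1 : ∫ x, p1 x ∂ν = 1)
    (hint : ∀ θ ∈ Icc (0 : ℝ) 1, Integrable (fun x => p0 x ^ (1 - θ) * p1 x ^ θ) ν)
    (θs : ℝ) (hθs : θs ∈ Ioo (0 : ℝ) 1)
    (hmax : ∀ θ ∈ Icc (0 : ℝ) 1,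
      -Real.log (∫ x, p0 x ^ (1 - θ) * p1 x ^ θ ∂ν)
        ≤ -Real.log (∫ x, p0 x ^ (1 - θs) * p1 x ^ θs ∂ν))
    (hlog : Integrable
      (fun x => p0 x ^ (1 - θs) * p1 x ^ θs * Real.log (p1 x / p0 x)) ν) :
    -- the tilted density
    (∀ ptilt : X → ℝ,
      ptilt = (fun x =>
        p0 x ^ (1 - θs) * p1 x ^ θs / ∫ y, p0 y ^ (1 - θs) * p1 y ^ θs ∂ν) →
      (∫ x, ptilt x * Real.log (ptilt x / p0 x) ∂ν
          = ∫ x, ptilt x * Real.log (ptilt x / p1 x) ∂ν)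
      ∧ (∫ x, ptilt x * Real.log (ptilt x / p0 x) ∂ν
          = -Real.log (∫ x, p0 x ^ (1 - θs) * p1 x ^ θs ∂ν))
      ∧ (-Real.log (∫ x, p0 x ^ (1 - θs) * p1 x ^ θs ∂ν)
          = ⨆ θ : Icc (0 : ℝ) 1,
              -Real.log (∫ x, p0 x ^ (1 - θ.1) * p1 x ^ θ.1 ∂ν))) := by
  intro ptilt hpt
  have hθsI : θs ∈ Icc (0:ℝ) 1 := Ioo_subset_Icc_self hθs
  set Z : ℝ := ∫ y, p0 y ^ (1 - θs) * p1 y ^ θs ∂ν with hZ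
  -- ν is nonzero
  have hν : ν ≠ 0 := by
    intro h
    rw [h, integral_zero_measure] at hp0
    norm_num at hp0
  -- positivity of all the partition functions
  have hFpos : ∀ θ ∈ Icc (0:ℝ) 1, 0 < ∫ x, p0 x ^ (1 - θ) * p1 x ^ θ ∂ν := by
    intro θ hθ
    have hI := hint θ hθ
    have hpos' : ∀ᵐ x ∂ν, 0 < p0 x ^ (1 - θ) * p1 x ^ θ := by
      filter_upwards [hp0pos, hp1pos] with x h0 h1
      exact mul_pos (Real.rpow_pos_of_pos h0 _) (Real.rpow_pos_of_pos h1 _)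
    rw [integral_pos_iff_support_of_nonneg_ae (hpos'.mono fun x h => h.le) hI]
    by_contra hc
    push_neg at hc
    have h0 : ν (Function.support fun x => p0 x ^ (1 - θ) * p1 x ^ θ) = 0 :=
      le_antisymm hc zero_le
    have h2 : ν {x | 0 < p0 x ^ (1 - θ) * p1 x ^ θ} = 0 :=
      measure_mono_null (fun x hx => ne_of_gt hx) h0
    have h3 : ν {x | 0 < p0 x ^ (1 - θ) * p1 x ^ θ}ᶜ = 0 := by
      rw [ae_iff] at hpos'
      exact hpos'
    have h4 : ν univ = 0 := by
      have := measure_union_le (μ := ν) {x | 0 < p0 x ^ (1 - θ) * p1 x ^ θ}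
        {x | 0 < p0 x ^ (1 - θ) * p1 x ^ θ}ᶜ
      rw [union_compl_self, h2, h3] at this
      simpa using this
    exact hν (Measure.measure_univ_eq_zero.mp h4)
  have hZpos : 0 < Z := hFpos θs hθsI
  -- choose δ
  obtain ⟨δ, hδpos, haI, hbI⟩ : ∃ δ : ℝ, 0 < δ ∧ θs - 2*δ ∈ Icc (0:ℝ) 1
      ∧ θs + 2*δ ∈ Icc (0:ℝ) 1 := by
    have hm1 : min θs (1 - θs) ≤ θs := min_le_left _ _
    have hm2 : min θs (1 - θs) ≤ 1 - θs := min_le_right _ _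
    have hm0 : 0 < min θs (1 - θs) := lt_min hθs.1 (by linarith [hθs.2])
    have h1 := hθs.1
    have h2 := hθs.2
    exact ⟨min θs (1 - θs) / 4, by linarith, ⟨by linarith, by linarith⟩,
      ⟨by linarith, by linarith⟩⟩
  set a : ℝ := θs - 2*δ with ha
  set b : ℝ := θs + 2*δ with hb
  -- the derivative of the partition function at θs
  have hK : ∫ x, p0 x ^ (1 - θs) * p1 x ^ θs * Real.log (p1 x / p0 x) ∂ν = 0 := by
    have hbound_int : Integrable (fun x => (2/δ) *
        ((p0 x ^ (1 - a) * p1 x ^ a) + (p0 x ^ (1 - b) * p1 x ^ b))) ν :=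
      ((hint a haI).add (hint b hbI)).const_mul _
    have hF_meas : ∀ᶠ θ in nhds θs,
        AEStronglyMeasurable (fun x => p0 x ^ (1 - θ) * p1 x ^ θ) ν := by
      filter_upwards [Icc_mem_nhds hθs.1 hθs.2] with θ hθ
      exact (hint θ hθ).aestronglyMeasurable
    have h_bound : ∀ᵐ x ∂ν, ∀ θ ∈ Metric.ball θs δ,
        ‖p0 x ^ (1 - θ) * p1 x ^ θ * Real.log (p1 x / p0 x)‖ ≤ (2/δ) *
        ((p0 x ^ (1 - a) * p1 x ^ a) + (p0 x ^ (1 - b) * p1 x ^ b)) := by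
      filter_upwards [hp0pos, hp1pos] with x h0 h1 θ hθ
      rw [Metric.mem_ball, Real.dist_eq, abs_sub_lt_iff] at hθ
      have hr : 0 < p1 x / p0 x := div_pos h1 h0
      set r : ℝ := p1 x / p0 x with hrdef
      calc ‖p0 x ^ (1 - θ) * p1 x ^ θ * Real.log r‖
          = (p0 x * r ^ θ) * |Real.log r| := by
            rw [Real.norm_eq_abs, abs_mul,
              abs_of_nonneg (mul_nonneg (Real.rpow_nonneg h0.le _) (Real.rpow_nonneg h1.le _)),
              aux_id h0 h1]
        _ ≤ (p0 x * r ^ θ) * ((r ^ δ + r ^ (-δ)) / δ) := by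
            have := aux_log_abs hr hδpos
            have hnn : 0 ≤ p0 x * r ^ θ := mul_nonneg h0.le (Real.rpow_nonneg hr.le _)
            exact mul_le_mul_of_nonneg_left this hnn
        _ = (p0 x * r ^ (θ + δ) + p0 x * r ^ (θ + -δ)) / δ := by
            rw [Real.rpow_add hr θ δ, Real.rpow_add hr θ (-δ)]
            ring
        _ ≤ ((p0 x * (r ^ a + r ^ b)) + (p0 x * (r ^ a + r ^ b))) / δ := by
            gcongr (?_ + ?_) / δ
            · exact mul_le_mul_of_nonneg_left
                (aux_rpow_convex hr (by linarith [hθ.1, hθ.2] : a ≤ θ + δ)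
                  (by linarith [hθ.1, hθ.2] : θ + δ ≤ b)) h0.le
            · exact mul_le_mul_of_nonneg_left
                (aux_rpow_convex hr (by linarith [hθ.1, hθ.2] : a ≤ θ + -δ)
                  (by linarith [hθ.1, hθ.2] : θ + -δ ≤ b)) h0.le
        _ = (2/δ) * ((p0 x ^ (1 - a) * p1 x ^ a) + (p0 x ^ (1 - b) * p1 x ^ b)) := by
            rw [aux_id h0 h1 a, aux_id h0 h1 b]
            ring
    have h_diff : ∀ᵐ x ∂ν, ∀ θ ∈ Metric.ball θs δ,
        HasDerivAt (fun θ => p0 x ^ (1 - θ) * p1 x ^ θ)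
          (p0 x ^ (1 - θ) * p1 x ^ θ * Real.log (p1 x / p0 x)) θ := by
      filter_upwards [hp0pos, hp1pos] with x h0 h1 θ _
      exact aux_deriv h0 h1 θ
    obtain ⟨-, hderiv⟩ := hasDerivAt_integral_of_dominated_loc_of_deriv_le (Metric.ball_mem_nhds θs hδpos)
      hF_meas (hint θs hθsI) hlog.aestronglyMeasurable h_bound hbound_int h_diff
    have hmin : IsLocalMin (fun θ => ∫ x, p0 x ^ (1 - θ) * p1 x ^ θ ∂ν) θs := by
      filter_upwards [Icc_mem_nhds hθs.1 hθs.2] with θ hθ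
      have h := hmax θ hθ
      have h1 := hFpos θ hθ
      rw [neg_le_neg_iff] at h
      exact (Real.log_le_log_iff hZpos h1).mp h
    exact hmin.hasDerivAt_eq_zero hderiv
  -- the general computation
  have hcomp : ∀ c : ℝ, ∫ x, (p0 x ^ (1 - θs) * p1 x ^ θs / Z)
      * (c * Real.log (p1 x / p0 x) - Real.log Z) ∂ν = -Real.log Z := by
    intro c
    have heq : (fun x => (p0 x ^ (1 - θs) * p1 x ^ θs / Z)
        * (c * Real.log (p1 x / p0 x) - Real.log Z))
        = fun x => (c / Z) * (p0 x ^ (1 - θs) * p1 x ^ θs * Real.log (p1 x / p0 x))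
          - (Real.log Z / Z) * (p0 x ^ (1 - θs) * p1 x ^ θs) := by
      funext x
      field_simp
    rw [heq, integral_sub (hlog.const_mul _) ((hint θs hθsI).const_mul _),
      integral_const_mul, integral_const_mul, hK, ← hZ]
    field_simp
    ring
  -- D_KL with respect to p0
  have hD0 : ∫ x, ptilt x * Real.log (ptilt x / p0 x) ∂ν = -Real.log Z := by
    rw [← hcomp θs]
    apply integral_congr_ae
    filter_upwards [hp0pos, hp1pos] with x h0 h1
    have hr : 0 < p1 x / p0 x := div_pos h1 h0
    have e1 : ptilt x / p0 x = (p1 x / p0 x) ^ θs / Z := by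
      rw [hpt]
      simp only
      rw [aux_id h0 h1]
      field_simp
    rw [e1, Real.log_div (Real.rpow_pos_of_pos hr θs).ne' hZpos.ne', Real.log_rpow hr, hpt]
  -- D_KL with respect to p1
  have hD1 : ∫ x, ptilt x * Real.log (ptilt x / p1 x) ∂ν = -Real.log Z := by
    rw [← hcomp (θs - 1)]
    apply integral_congr_ae
    filter_upwards [hp0pos, hp1pos] with x h0 h1
    have hr : 0 < p1 x / p0 x := div_pos h1 h0
    have e1 : ptilt x / p1 x = (p1 x / p0 x) ^ (θs - 1) / Z := by
      rw [hpt]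
      simp only
      rw [aux_id h0 h1, Real.rpow_sub hr, Real.rpow_one]
      field_simp
    rw [e1, Real.log_div (Real.rpow_pos_of_pos hr (θs - 1)).ne' hZpos.ne',
      Real.log_rpow hr, hpt]
  -- the supremum part
  have hsup : -Real.log Z = ⨆ θ : Icc (0:ℝ) 1,
      -Real.log (∫ x, p0 x ^ (1 - θ.1) * p1 x ^ θ.1 ∂ν) := by
    haveI : Nonempty (Icc (0:ℝ) 1) := ⟨⟨0, by norm_num⟩⟩
    apply le_antisymm
    · exact le_ciSup (f := fun θ : Icc (0:ℝ) 1 =>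
        -Real.log (∫ x, p0 x ^ (1 - θ.1) * p1 x ^ θ.1 ∂ν))
        ⟨-Real.log Z, by rintro y ⟨θ, rfl⟩; exact hmax θ θ.2⟩ ⟨θs, hθsI⟩
    · exact ciSup_le fun θ => hmax θ θ.2
  exact ⟨hD0.trans hD1.symm, hD0, hsup⟩
end

section
/- Let $a_{\tau j} \geq 0$ for $\tau \in [t]$, $j \in [n]$, and define $B = \frac{\left(\sum_{\tau,j} a_{\tau j}\right)^2}{\sum_{\tau,j} a_{\tau j}^2}$. If $\sum_{\tau=1}^t \sum_{j=1}^n (a_{\tau j} - 1)^2 \leq M$ for a constant $M$ independent of $t$, then $B \geq tn - \left(\sum_{\tau,j}(a_{\tau j}-1)^2\right) + o(1) \geq tn - M + o(1)$ as $t \to \infty$; i.e., $(\sum_{\tau,j} a_{\tau j})^2 / \sum_{\tau,j} a_{\tau j}^2 - (tn - \sum_{\tau,j}(a_{\tau j}-1)^2) \to 0$. -/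
open Finset Filter

private lemma sqrt_nat_atTop : Tendsto (fun t : ℕ => Real.sqrt t) atTop atTop := by
  apply tendsto_atTop_atTop.2
  intro b
  refine ⟨Nat.ceil (b ^ 2), fun t ht => ?_⟩
  calc b ≤ |b| := le_abs_self b
    _ = Real.sqrt (b ^ 2) := (Real.sqrt_sq_eq_abs b).symm
    _ ≤ Real.sqrt t := Real.sqrt_le_sqrt (by
        calc b ^ 2 ≤ (Nat.ceil (b ^ 2) : ℝ) := Nat.le_ceil _
          _ ≤ t := Nat.cast_le.2 ht)

/-- Key lemma: if partial sums of squares are uniformly bounded, then partial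
sums are `o(√t)`. -/
private lemma key_osqrt (x : ℕ → ℝ) (C : ℝ)
    (hC : ∀ t : ℕ, ∑ τ ∈ Finset.Icc 1 t, x τ ^ 2 ≤ C) :
    Tendsto (fun t : ℕ => (∑ τ ∈ Finset.Icc 1 t, x τ) / Real.sqrt t) atTop (nhds 0) := by
  set P : ℕ → ℝ := fun t => ∑ τ ∈ Finset.Icc 1 t, x τ ^ 2 with hPdef
  have hPmono : Monotone P := by
    intro s t hst
    exact Finset.sum_le_sum_of_subset_of_nonneg
      (Finset.Icc_subset_Icc le_rfl hst) (fun i _ _ => sq_nonneg _)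
  have hPbdd : BddAbove (Set.range P) := ⟨C, by rintro _ ⟨t, rfl⟩; exact hC t⟩
  have hPlim : Tendsto P atTop (nhds (⨆ t, P t)) := tendsto_atTop_ciSup hPmono hPbdd
  set L : ℝ := ⨆ t, P t with hLdef
  have hPle : ∀ t, P t ≤ L := fun t => le_ciSup hPbdd t
  rw [NormedAddCommGroup.tendsto_nhds_zero]
  intro ε hε
  have hδ : (0:ℝ) < ε ^ 2 / 16 := by positivity
  obtain ⟨T, hT⟩ := (hPlim.eventually (eventually_gt_nhds (show L - ε ^ 2 / 16 < L by
    linarith))).exists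
  set A : ℝ := ∑ τ ∈ Finset.Icc 1 T, x τ with hAdef
  have hN : ∀ᶠ t : ℕ in atTop, ((4 * |A| / ε) ^ 2 < (t : ℝ)) :=
    tendsto_natCast_atTop_atTop.eventually_gt_atTop _
  filter_upwards [hN, eventually_ge_atTop T, eventually_ge_atTop 1] with t htA htT ht1
  have ht0 : (0:ℝ) < (t:ℝ) := by exact_mod_cast Nat.lt_of_lt_of_le Nat.one_pos ht1
  have hsqrt_pos : 0 < Real.sqrt t := Real.sqrt_pos.2 ht0
  -- split the sum
  have hsplit : (∑ τ ∈ Finset.Icc 1 t, x τ) = A + ∑ τ ∈ Finset.Ioc T t, x τ := by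
    rw [hAdef]
    rw [show Finset.Icc 1 t = Finset.Ioc 0 t from Finset.Icc_add_one_left_eq_Ioc 0 t,
      show Finset.Icc 1 T = Finset.Ioc 0 T from Finset.Icc_add_one_left_eq_Ioc 0 T]
    exact (Finset.sum_Ioc_consecutive x (Nat.zero_le T) htT).symm
  set B : ℝ := ∑ τ ∈ Finset.Ioc T t, x τ with hBdef
  -- bound on the tail sum of squares
  have htail : ∑ τ ∈ Finset.Ioc T t, x τ ^ 2 ≤ ε ^ 2 / 16 := by
    have : P T + ∑ τ ∈ Finset.Ioc T t, x τ ^ 2 = P t := by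
      rw [hPdef]
      simp only
      rw [show Finset.Icc 1 t = Finset.Ioc 0 t from Finset.Icc_add_one_left_eq_Ioc 0 t,
        show Finset.Icc 1 T = Finset.Ioc 0 T from Finset.Icc_add_one_left_eq_Ioc 0 T]
      exact Finset.sum_Ioc_consecutive _ (Nat.zero_le T) htT
    have h2 := hPle t
    linarith
  -- Cauchy–Schwarz bound on B
  have hB2 : B ^ 2 ≤ (t : ℝ) * (ε ^ 2 / 16) := by
    have h1 : B ^ 2 ≤ ((Finset.Ioc T t).card : ℝ) * ∑ τ ∈ Finset.Ioc T t, x τ ^ 2 :=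
      sq_sum_le_card_mul_sum_sq
    have hcard : ((Finset.Ioc T t).card : ℝ) ≤ (t : ℝ) := by
      rw [Nat.card_Ioc]
      exact_mod_cast Nat.sub_le t T
    have hnn : (0:ℝ) ≤ ∑ τ ∈ Finset.Ioc T t, x τ ^ 2 :=
      Finset.sum_nonneg fun i _ => sq_nonneg _
    calc B ^ 2 ≤ ((Finset.Ioc T t).card : ℝ) * ∑ τ ∈ Finset.Ioc T t, x τ ^ 2 := h1
      _ ≤ (t : ℝ) * (ε ^ 2 / 16) :=
        mul_le_mul hcard htail hnn ht0.le
  have hBabs : |B| ≤ Real.sqrt t * (ε / 4) := by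
    have : |B| = Real.sqrt (B ^ 2) := (Real.sqrt_sq_eq_abs B).symm
    rw [this]
    calc Real.sqrt (B ^ 2) ≤ Real.sqrt ((t : ℝ) * (ε ^ 2 / 16)) := Real.sqrt_le_sqrt hB2
      _ = Real.sqrt t * (ε / 4) := by
          rw [Real.sqrt_mul ht0.le, show (ε ^ 2 / 16 : ℝ) = (ε / 4) ^ 2 by ring,
            Real.sqrt_sq (by positivity)]
  have hAabs : |A| ≤ Real.sqrt t * (ε / 4) := by
    have h1 : 4 * |A| / ε ≤ Real.sqrt t := by
      have := Real.sqrt_le_sqrt htA.le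
      rwa [Real.sqrt_sq_eq_abs, abs_of_nonneg (by positivity)] at this
    have : 4 * |A| ≤ Real.sqrt t * ε := by
      rw [div_le_iff₀ hε] at h1; linarith
    linarith
  rw [hsplit]
  have habs : |A + B| ≤ Real.sqrt t * (ε / 2) := by
    calc |A + B| ≤ |A| + |B| := abs_add_le _ _
      _ ≤ Real.sqrt t * (ε / 4) + Real.sqrt t * (ε / 4) := add_le_add hAabs hBabs
      _ = Real.sqrt t * (ε / 2) := by ring
  have : ‖(A + B) / Real.sqrt t‖ ≤ ε / 2 := by
    rw [Real.norm_eq_abs, abs_div, abs_of_nonneg hsqrt_pos.le, div_le_iff₀ hsqrt_pos]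
    calc |A + B| ≤ Real.sqrt t * (ε / 2) := habs
      _ = ε / 2 * Real.sqrt t := by ring
  linarith

/-- If `a_{τj} ≥ 0` and `∑_{τ≤t} ∑_j (a_{τj}-1)² ≤ M` uniformly in `t`, then
`(∑ a)²/(∑ a²) - (tn - ∑ (a-1)²) → 0` as `t → ∞`. -/
theorem stmt_18 (n : ℕ) (hn : 0 < n) (a : ℕ → Fin n → ℝ)
    (ha : ∀ τ j, 0 ≤ a τ j) (M : ℝ)
    (hM : ∀ t : ℕ, ∑ τ ∈ Finset.Icc 1 t, ∑ j, (a τ j - 1) ^ 2 ≤ M) :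
    Tendsto (fun t : ℕ =>
        (∑ τ ∈ Finset.Icc 1 t, ∑ j, a τ j) ^ 2
            / (∑ τ ∈ Finset.Icc 1 t, ∑ j, (a τ j) ^ 2)
          - ((t : ℝ) * n - ∑ τ ∈ Finset.Icc 1 t, ∑ j, (a τ j - 1) ^ 2))
      atTop (nhds 0) := by
  set E : ℕ → ℝ := fun t => ∑ τ ∈ Finset.Icc 1 t, ∑ j, (a τ j - 1) with hEdef
  set D : ℕ → ℝ := fun t => ∑ τ ∈ Finset.Icc 1 t, ∑ j, (a τ j - 1) ^ 2 with hDdef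
  set S : ℕ → ℝ := fun t => ∑ τ ∈ Finset.Icc 1 t, ∑ j, a τ j with hSdef
  set Q : ℕ → ℝ := fun t => ∑ τ ∈ Finset.Icc 1 t, ∑ j, (a τ j) ^ 2 with hQdef
  have hone : ∀ t : ℕ, (∑ τ ∈ Finset.Icc 1 t, ∑ _j : Fin n, (1:ℝ)) = (t : ℝ) * n := by
    intro t
    simp [Finset.sum_const, Nat.card_Icc, mul_comm]
  have hS : ∀ t : ℕ, S t = (t : ℝ) * n + E t := by
    intro t
    rw [hSdef, hEdef, ← hone t]
    simp only [← Finset.sum_add_distrib]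
    apply Finset.sum_congr rfl; intro τ _
    apply Finset.sum_congr rfl; intro j _
    ring
  have hQ : ∀ t : ℕ, Q t = (t : ℝ) * n + 2 * E t + D t := by
    intro t
    rw [hQdef, hEdef, hDdef, ← hone t]
    simp only [Finset.mul_sum, ← Finset.sum_add_distrib]
    apply Finset.sum_congr rfl; intro τ _
    apply Finset.sum_congr rfl; intro j _
    ring
  have hD0 : ∀ t, 0 ≤ D t := fun t =>
    Finset.sum_nonneg fun τ _ => Finset.sum_nonneg fun j _ => sq_nonneg _
  have hDM : ∀ t, D t ≤ M := hM
  -- E/√t → 0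
  have hC : ∀ t : ℕ, ∑ τ ∈ Finset.Icc 1 t, (∑ j, (a τ j - 1)) ^ 2 ≤ (n : ℝ) * M := by
    intro t
    calc ∑ τ ∈ Finset.Icc 1 t, (∑ j, (a τ j - 1)) ^ 2
        ≤ ∑ τ ∈ Finset.Icc 1 t, (n : ℝ) * ∑ j, (a τ j - 1) ^ 2 := by
          apply Finset.sum_le_sum; intro τ _
          have := sq_sum_le_card_mul_sum_sq (s := (Finset.univ : Finset (Fin n)))
            (f := fun j => a τ j - 1)
          simpa using this
      _ = (n : ℝ) * D t := by rw [hDdef, Finset.mul_sum]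
      _ ≤ (n : ℝ) * M := by
          apply mul_le_mul_of_nonneg_left (hDM t) (by positivity)
  have hEs : Tendsto (fun t : ℕ => E t / Real.sqrt t) atTop (nhds 0) :=
    key_osqrt (fun τ => ∑ j, (a τ j - 1)) ((n : ℝ) * M) hC
  have hsqrt_inv : Tendsto (fun t : ℕ => (Real.sqrt t)⁻¹) atTop (nhds 0) :=
    sqrt_nat_atTop.inv_tendsto_atTop
  have hEt : Tendsto (fun t : ℕ => E t / (t : ℝ)) atTop (nhds 0) := by
    have heq : (fun t : ℕ => E t / (t : ℝ)) =
        fun t : ℕ => (E t / Real.sqrt t) * (Real.sqrt t)⁻¹ := by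
      funext t
      have h : Real.sqrt t * Real.sqrt t = (t : ℝ) := Real.mul_self_sqrt (Nat.cast_nonneg t)
      conv_lhs => rw [← h]
      rw [← div_div, div_eq_mul_inv]
    rw [heq]
    simpa using hEs.mul hsqrt_inv
  have hDs : Tendsto (fun t : ℕ => D t / Real.sqrt t) atTop (nhds 0) := by
    apply squeeze_zero (fun t => div_nonneg (hD0 t) (Real.sqrt_nonneg _))
      (g := fun t : ℕ => M * (Real.sqrt t)⁻¹)
    · intro t
      rw [div_eq_mul_inv]
      exact mul_le_mul_of_nonneg_right (hDM t) (inv_nonneg.2 (Real.sqrt_nonneg _))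
    · simpa using (tendsto_const_nhds (x := M)).mul hsqrt_inv
  have hDt : Tendsto (fun t : ℕ => D t / (t : ℝ)) atTop (nhds 0) := by
    have heq : (fun t : ℕ => D t / (t : ℝ)) =
        fun t : ℕ => (D t / Real.sqrt t) * (Real.sqrt t)⁻¹ := by
      funext t
      have h : Real.sqrt t * Real.sqrt t = (t : ℝ) := Real.mul_self_sqrt (Nat.cast_nonneg t)
      conv_lhs => rw [← h]
      rw [← div_div, div_eq_mul_inv]
    rw [heq]
    simpa using hDs.mul hsqrt_inv
  -- Q/t → n
  have hQt : Tendsto (fun t : ℕ => Q t / (t : ℝ)) atTop (nhds n) := by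
    have hlim : Tendsto (fun t : ℕ => (n : ℝ) + 2 * (E t / (t : ℝ)) + D t / (t : ℝ))
        atTop (nhds n) := by
      have := (tendsto_const_nhds (x := (n : ℝ))).add ((hEt.const_mul 2).add hDt)
      simpa [add_assoc] using this
    apply hlim.congr'
    filter_upwards [eventually_ge_atTop 1] with t ht1
    have ht0 : (t : ℝ) ≠ 0 := by
      exact_mod_cast Nat.pos_of_ne_zero (by omega) |>.ne'
    rw [hQ t]
    field_simp
  have hnpos : (0:ℝ) < n := by exact_mod_cast hn
  -- eventually Q > 0
  have hQpos : ∀ᶠ t : ℕ in atTop, 0 < Q t := by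
    filter_upwards [hQt.eventually (eventually_gt_nhds (half_lt_self hnpos)),
      eventually_ge_atTop 1] with t ht ht1
    have ht0 : (0:ℝ) < (t : ℝ) := by exact_mod_cast Nat.lt_of_lt_of_le Nat.one_pos ht1
    have h2 : 0 < Q t / (t : ℝ) := lt_trans (by positivity) ht
    have := mul_pos h2 ht0
    rwa [div_mul_cancel₀ _ ht0.ne'] at this
  -- the limit of the auxiliary expression
  have hg : Tendsto (fun t : ℕ => (E t / Real.sqrt t + D t / Real.sqrt t) ^ 2 / (Q t / (t : ℝ)))
      atTop (nhds 0) := by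
    have := Tendsto.div ((hEs.add hDs).pow 2) hQt hnpos.ne'
    rw [show ((0:ℝ) + 0) ^ 2 / (n:ℝ) = 0 by simp] at this
    exact this
  apply hg.congr'
  filter_upwards [hQpos, eventually_ge_atTop 1] with t hQp ht1
  have ht0 : (0:ℝ) < (t : ℝ) := by exact_mod_cast Nat.lt_of_lt_of_le Nat.one_pos ht1
  have hQne : Q t ≠ 0 := hQp.ne'
  rw [← add_div, div_pow, Real.sq_sqrt ht0.le]
  have hQne' : (t : ℝ) * n + 2 * E t + D t ≠ 0 := by rw [← hQ t]; exact hQne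
  have hid : (E t + D t) ^ 2 / (t : ℝ) / (Q t / (t : ℝ)) =
      S t ^ 2 / Q t - ((t : ℝ) * n - D t) := by
    rw [hS t, hQ t]
    rw [div_div_div_cancel_right₀ ht0.ne', eq_sub_iff_add_eq, div_add' _ _ _ hQne']
    congr 1
    ring
  exact hid
end
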